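/- Let η ∈ [0, 1] and N > 0 be real numbers. Set p₀ = N/(N+1)², p₁ = (1+N²)/(N+1)³, t₀ = 1/(N+1)², P₁ = (η/(N+1))·(p₀·N/(N+1) + p₁) + 2(1−η)·N/(N+1)³, and f₁ = (2η + N² − ηN + N)/(2(η + 2N² − 2ηN + 2N)). Let A be the 4×4 real matrix (η/2)·[[p₁/(N+1), 0, 0, t₀²], [0, p₀·N/(N+1)², 0, 0], [0, 0, p₀·N/(N+1)², 0], [t₀², 0, 0, p₁/(N+1)]] + ((1−η)/2)·(N/(N+1)³)·I₄. Then A = P₁ · M(f₁), where M(f) = (1/6)·[[2f+1, 0, 0, 4f−1], [0, 2(1−f), 0, 0], [0, 0, 2(1−f), 0], [4f−1, 0, 0, 2f+1]]. -/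

import Mathlib

open Matrix


lemma inv_matrix_aux (x y a b c P f : ℝ)
    (h1 : x * a + y = P * ((2 * f + 1) / 6))
    (h2 : x * b = P * ((4 * f - 1) / 6))
    (h3 : x * c + y = P * (2 * (1 - f) / 6)) :
    x • !![a, 0, 0, b; 0, c, 0, 0; 0, 0, c, 0; b, 0, 0, a]
      + y • (1 : Matrix (Fin 4) (Fin 4) ℝ)
    = P • ((1 / 6 : ℝ) • !![2 * f + 1, 0, 0, 4 * f - 1;
                   0, 2 * (1 - f), 0, 0;
                   0, 0, 2 * (1 - f), 0;
                   4 * f - 1, 0, 0, 2 * f + 1]) := by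
  ext i j
  fin_cases i <;> fin_cases j <;>
    · simp only [Matrix.add_apply, Matrix.smul_apply, Matrix.cons_val', Matrix.cons_val_zero,
        Matrix.cons_val_one, Matrix.head_cons, Matrix.empty_val', Matrix.cons_val_fin_one,
        Matrix.of_apply, Matrix.one_apply, smul_eq_mul, Fin.isValue, Matrix.head_fin_const]
      norm_num [Fin.ext_iff] <;> linarith

/-- the one-photon-sector block of the Alice–Bob state after pure loss η
followed by mode-wise Gaussian noise of variance N equals P₁·M(f₁), with p₀, p₁, t₀, P₁, f₁
as specified and M(f) the one-parameter family of invariant two-qubit states. -/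
theorem gaussian_noise_one_photon_invariant (η N : ℝ) (hη : η ∈ Set.Icc (0 : ℝ) 1)
    (hN : 0 < N) :
    let p0 : ℝ := N / (N + 1) ^ 2
    let p1 : ℝ := (1 + N ^ 2) / (N + 1) ^ 3
    let t0 : ℝ := 1 / (N + 1) ^ 2
    let P1 : ℝ := (η / (N + 1)) * (p0 * N / (N + 1) + p1) + 2 * (1 - η) * N / (N + 1) ^ 3
    let f1 : ℝ := (2 * η + N ^ 2 - η * N + N) / (2 * (η + 2 * N ^ 2 - 2 * η * N + 2 * N))
    let M : ℝ → Matrix (Fin 4) (Fin 4) ℝ := fun f =>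
      (1 / 6 : ℝ) • !![2 * f + 1, 0, 0, 4 * f - 1;
                       0, 2 * (1 - f), 0, 0;
                       0, 0, 2 * (1 - f), 0;
                       4 * f - 1, 0, 0, 2 * f + 1]
    let A : Matrix (Fin 4) (Fin 4) ℝ :=
      (η / 2) • !![p1 / (N + 1), 0, 0, t0 ^ 2;
                   0, p0 * N / (N + 1) ^ 2, 0, 0;
                   0, 0, p0 * N / (N + 1) ^ 2, 0;
                   t0 ^ 2, 0, 0, p1 / (N + 1)]
        + ((1 - η) / 2 * (N / (N + 1) ^ 3)) • (1 : Matrix (Fin 4) (Fin 4) ℝ)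
    A = P1 • M f1 := by
  intro p0 p1 t0 P1 f1 M A
  have hN1 : N + 1 ≠ 0 := by nlinarith
  have hden : η + 2 * N ^ 2 - 2 * η * N + 2 * N ≠ 0 := by
    nlinarith [hη.1, hη.2, hN, sq_nonneg N]
  show _ = _
  refine inv_matrix_aux _ _ _ _ _ _ _ ?_ ?_ ?_ <;>
    · show _ = _
      simp only [P1, f1, p0, p1, t0]
      have hden' : η + 2 * N ^ 2 - η * 2 * N + 2 * N ≠ 0 := by
        rw [show η * 2 * N = 2 * η * N by ring]; exact hden
      field_simp
      ring
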